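/- Let A be the Cartan matrix of type A_2 (a_{11}=a_{22}=2, a_{12}=a_{21}=-1). Then every cluster-additive function k associated to A is periodic: k(i, m+5) is determined by the gliding symmetry, and concretely the map m ↦ (k(1,m), k(2,m)) ∈ ℤ^2 is periodic with period 5, i.e. k(i,m+5) = k(i,m) for all i ∈ {1,2} and m ∈ ℤ. -/
import Mathlib


open Finset

/-- An `r × r` symmetrizable generalized Cartan matrix. -/
def IsSGCM {r : ℕ} (A : Matrix (Fin r) (Fin r) ℤ) : Prop :=
  (∀ i, A i i = 2) ∧ (∀ i j, i ≠ j → A i j ≤ 0) ∧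
    ∃ D : Fin r → ℤ, (∀ i, 0 < D i) ∧ ∀ i j, D i * A i j = D j * A j i

/-- A cluster-additive function associated to `A`. -/
def ClusterAdditive {r : ℕ} (A : Matrix (Fin r) (Fin r) ℤ) (k : Fin r → ℤ → ℤ) : Prop :=
  ∀ (i : Fin r) (m : ℤ),
    k i m + k i (m + 1) =
      (∑ j ∈ Finset.univ.filter (fun j => i < j), (-(A j i)) * max (k j m) 0) +
        ∑ j ∈ Finset.univ.filter (fun j => j < i), (-(A j i)) * max (k j (m + 1)) 0

/-- A tropical frieze associated to `A`. -/
def TropicalFrieze {r : ℕ} (A : Matrix (Fin r) (Fin r) ℤ) (f : Fin r → ℤ → ℤ) : Prop :=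
  ∀ (i : Fin r) (m : ℤ),
    f i m + f i (m + 1) =
      max ((∑ j ∈ Finset.univ.filter (fun j => i < j), (-(A j i)) * f j m) +
        ∑ j ∈ Finset.univ.filter (fun j => j < i), (-(A j i)) * f j (m + 1)) 0

/-- Every cluster-additive function associated to the Cartan matrix of type `A₂` is
periodic with period `5`. -/
theorem cluster_additive_A2_period_five (k : Fin 2 → ℤ → ℤ)
    (hk : ClusterAdditive !![2, -1; -1, 2] k) :
    ∀ (i : Fin 2) (m : ℤ), k i (m + 5) = k i m := by
  have h0 : ∀ m : ℤ, k 0 m + k 0 (m+1) = max (k 1 m) 0 := by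
    intro m
    have := hk 0 m
    rw [show (Finset.univ.filter (fun j : Fin 2 => (0:Fin 2) < j)) = {1} from by decide,
        show (Finset.univ.filter (fun j : Fin 2 => j < (0:Fin 2))) = ∅ from by decide] at this
    simpa using this
  have h1 : ∀ m : ℤ, k 1 m + k 1 (m+1) = max (k 0 (m+1)) 0 := by
    intro m
    have := hk 1 m
    rw [show (Finset.univ.filter (fun j : Fin 2 => (1:Fin 2) < j)) = ∅ from by decide,
        show (Finset.univ.filter (fun j : Fin 2 => j < (1:Fin 2))) = {0} from by decide] at this
    simpa using this
  intro i m
  have e0 := h0 m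
  have e1 : k 0 (m+1) + k 0 (m+2) = max (k 1 (m+1)) 0 := by
    simpa [show m+1+1 = m+2 by ring] using h0 (m+1)
  have e2 : k 0 (m+2) + k 0 (m+3) = max (k 1 (m+2)) 0 := by
    simpa [show m+2+1 = m+3 by ring] using h0 (m+2)
  have e3 : k 0 (m+3) + k 0 (m+4) = max (k 1 (m+3)) 0 := by
    simpa [show m+3+1 = m+4 by ring] using h0 (m+3)
  have e4 : k 0 (m+4) + k 0 (m+5) = max (k 1 (m+4)) 0 := by
    simpa [show m+4+1 = m+5 by ring] using h0 (m+4)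
  have f0 := h1 m
  have f1 : k 1 (m+1) + k 1 (m+2) = max (k 0 (m+2)) 0 := by
    simpa [show m+1+1 = m+2 by ring] using h1 (m+1)
  have f2 : k 1 (m+2) + k 1 (m+3) = max (k 0 (m+3)) 0 := by
    simpa [show m+2+1 = m+3 by ring] using h1 (m+2)
  have f3 : k 1 (m+3) + k 1 (m+4) = max (k 0 (m+4)) 0 := by
    simpa [show m+3+1 = m+4 by ring] using h1 (m+3)
  have f4 : k 1 (m+4) + k 1 (m+5) = max (k 0 (m+5)) 0 := by
    simpa [show m+4+1 = m+5 by ring] using h1 (m+4)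
  fin_cases i
  · show k 0 (m+5) = k 0 m
    omega
  · show k 1 (m+5) = k 1 m
    omega
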